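/- arXiv:2603.00970 — 3 statements merged into one kernel-verified Lean document; each statement's English description precedes it below -/
import Mathlib

section
/- Let R be a commutative ring. Suppose that every nonzero w-flat R-module is w-faithfully flat; that is, for every nonzero R-module M, if M_m is a flat R_m-module for all m ∈ w-Max(R), then M_m is a faithfully flat R_m-module for all m ∈ w-Max(R). Then R is a DW-ring, i.e., the only GV-ideal of R is R itself. -/
universe u v

section WDefs

variable (R : Type u) [CommRing R]

/-- The canonical `R`-linear map `R → Hom_R(J, R)`, `r ↦ (j ↦ r * j)`. -/
def gvCanonicalMap (J : Ideal R) : R →ₗ[R] (J →ₗ[R] R) where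
  toFun r := r • (J.subtype)
  map_add' x y := add_smul x y _
  map_smul' r x := by simp [mul_smul]

/-- A finitely generated ideal `J` of `R` is a GV-ideal (Glaz–Vasconcelos ideal)
if the canonical map `R → Hom_R(J, R)` is an isomorphism. -/
def IsGVIdeal (J : Ideal R) : Prop :=
  J.FG ∧ Function.Bijective (gvCanonicalMap R J)

/-- An ideal `I` of `R` is a w-ideal if whenever `J x ⊆ I` for some GV-ideal `J`,
then `x ∈ I`. -/
def IsWIdeal (I : Ideal R) : Prop :=
  ∀ x : R, (∃ J : Ideal R, IsGVIdeal R J ∧ ∀ j ∈ J, j * x ∈ I) → x ∈ I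

/-- `m` is a maximal w-ideal: maximal among the proper w-ideals of `R`. -/
def IsMaxWIdeal (m : Ideal R) : Prop :=
  IsWIdeal R m ∧ m ≠ ⊤ ∧ ∀ I : Ideal R, IsWIdeal R I → I ≠ ⊤ → m ≤ I → I = m

variable {M : Type v} [AddCommGroup M] [Module R M]

/-- `x` is a GV-torsion element if it is killed by some GV-ideal. -/
def IsGVTorsionElem (x : M) : Prop :=
  ∃ J : Ideal R, IsGVIdeal R J ∧ ∀ j ∈ J, j • x = 0

variable (M)

/-- `M` is GV-torsion-free if it has no nonzero GV-torsion element. -/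
def IsGVTorsionFree : Prop := ∀ x : M, IsGVTorsionElem R x → x = 0

/-- `M` is GV-torsion if all its elements are GV-torsion. -/
def IsGVTorsion : Prop := ∀ x : M, IsGVTorsionElem R x

/-- `M` is a w-module: GV-torsion-free and every map from a GV-ideal to `M`
extends to `R`. -/
def IsWModule : Prop :=
  IsGVTorsionFree R M ∧
    ∀ J : Ideal R, IsGVIdeal R J → ∀ f : J →ₗ[R] M,
      ∃ g : R →ₗ[R] M, ∀ x : J, g (x : R) = f x

end WDefs

section Aux

variable {R : Type u} [CommRing R]

lemma gvCanonicalMap_apply (J : Ideal R) (r : R) (j : J) :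
    gvCanonicalMap R J r j = r * (j : R) := rfl

lemma gv_eq_zero {J : Ideal R} (h : IsGVIdeal R J) {x : R}
    (hx : ∀ j ∈ J, j * x = 0) : x = 0 := by
  apply h.2.1
  ext j
  simp only [gvCanonicalMap_apply, map_zero, LinearMap.zero_apply]
  rw [mul_comm]
  exact hx j j.2

lemma gv_top : IsGVIdeal R (⊤ : Ideal R) := by
  refine ⟨⟨{1}, by simp⟩, ?_, ?_⟩
  · intro a b hab
    have := congrArg (fun f => f ⟨1, trivial⟩) hab
    simpa [gvCanonicalMap_apply] using this
  · intro f
    refine ⟨f ⟨1, trivial⟩, ?_⟩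
    ext j
    rw [gvCanonicalMap_apply]
    have : f j = f ((j : R) • ⟨1, trivial⟩) := by
      congr 1
      ext
      simp
    rw [this, map_smul, smul_eq_mul, mul_comm]

noncomputable def gvInv {J : Ideal R} (h : IsGVIdeal R J) : (J →ₗ[R] R) →ₗ[R] R :=
  (LinearEquiv.ofBijective _ h.2).symm.toLinearMap

lemma gvInv_spec {J : Ideal R} (h : IsGVIdeal R J) (f : J →ₗ[R] R) (j : J) :
    gvInv h f * (j : R) = f j := by
  have := (LinearEquiv.ofBijective _ h.2).apply_symm_apply f
  have h2 : gvCanonicalMap R J (gvInv h f) = f := this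
  calc gvInv h f * (j : R) = gvCanonicalMap R J (gvInv h f) j := rfl
    _ = f j := by rw [h2]

end Aux

section Aux2

variable {R : Type u} [CommRing R]

/-- The bilinear family used in the surjectivity argument for products of GV-ideals. -/
noncomputable def gvF (J1 J2 : Ideal R) (f : (J1 * J2 : Ideal R) →ₗ[R] R) :
    J2 →ₗ[R] (J1 →ₗ[R] R) where
  toFun j2 :=
    { toFun := fun j1 => f ⟨(j1 : R) * (j2 : R), Ideal.mul_mem_mul j1.2 j2.2⟩
      map_add' := fun x y => by
        rw [← map_add]
        exact congrArg f (Subtype.ext (by simp [add_mul]))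
      map_smul' := fun r x => by
        rw [RingHom.id_apply, ← map_smul]
        refine congrArg f (Subtype.ext ?_)
        simp only [Submodule.coe_smul, smul_eq_mul, SetLike.val_smul]
        ring }
  map_add' j2 j2' := by
    ext j1
    simp only [LinearMap.coe_mk, AddHom.coe_mk, LinearMap.add_apply]
    rw [← map_add]
    exact congrArg f (Subtype.ext (by simp [mul_add]))
  map_smul' r j2 := by
    ext j1
    simp only [LinearMap.coe_mk, AddHom.coe_mk, RingHom.id_apply, LinearMap.smul_apply]
    rw [← map_smul]
    refine congrArg f (Subtype.ext ?_)
    simp only [Submodule.coe_smul, smul_eq_mul, SetLike.val_smul]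
    ring

lemma gv_mul {J1 J2 : Ideal R} (h1 : IsGVIdeal R J1) (h2 : IsGVIdeal R J2) :
    IsGVIdeal R (J1 * J2) := by
  refine ⟨Submodule.FG.mul h1.1 h2.1, ?_, ?_⟩
  · intro a b hab
    have key : ∀ x : R, gvCanonicalMap R (J1 * J2) x = 0 → x = 0 := by
      intro x hx
      have hx2 : ∀ j ∈ J1 * J2, j * x = 0 := by
        intro j hj
        have := congrArg (fun g => g ⟨j, hj⟩) hx
        simpa [gvCanonicalMap_apply, mul_comm] using this
      apply gv_eq_zero h2
      intro j2 hj2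
      apply gv_eq_zero h1
      intro j1 hj1
      have := hx2 (j1 * j2) (Ideal.mul_mem_mul hj1 hj2)
      linear_combination this
    have : gvCanonicalMap R (J1 * J2) (a - b) = 0 := by
      rw [map_sub, hab, sub_self]
    exact sub_eq_zero.mp (key _ this)
  · intro f
    set g : J2 →ₗ[R] R := (gvInv h1) ∘ₗ (gvF J1 J2 f) with hg
    refine ⟨gvInv h2 g, ?_⟩
    ext x
    rw [gvCanonicalMap_apply]
    obtain ⟨x, hx⟩ := x
    induction hx using Submodule.mul_induction_on' with
    | mem_mul_mem a ha b hb =>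
      have e1 : gvInv h2 g * b = g ⟨b, hb⟩ := gvInv_spec h2 g ⟨b, hb⟩
      have e2 : g ⟨b, hb⟩ * a = gvF J1 J2 f ⟨b, hb⟩ ⟨a, ha⟩ := by
        rw [hg]
        exact gvInv_spec h1 _ ⟨a, ha⟩
      calc gvInv h2 g * (a * b) = (gvInv h2 g * b) * a := by ring
        _ = g ⟨b, hb⟩ * a := by rw [e1]
        _ = f ⟨a * b, _⟩ := e2
    | add x hx y hy ihx ihy =>
      have : f ⟨x + y, add_mem hx hy⟩ = f ⟨x, hx⟩ + f ⟨y, hy⟩ := by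
        rw [← map_add]; rfl
      push_cast
      rw [this, mul_add]
      push_cast at ihx ihy
      rw [ihx, ihy]

end Aux2


section Aux3

variable {R : Type u} [CommRing R]

lemma gv_prod {ι : Type*} (s : Finset ι) (f : ι → Ideal R)
    (hf : ∀ i ∈ s, IsGVIdeal R (f i)) : IsGVIdeal R (∏ i ∈ s, f i) := by
  classical
  induction s using Finset.induction_on with
  | empty => simpa using gv_top
  | insert _ _ hnot ih =>
    rename_i a t
    rw [Finset.prod_insert hnot]
    exact gv_mul (hf a (Finset.mem_insert_self a t))
      (ih fun i hi => hf i (Finset.mem_insert_of_mem hi))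

/-- The `w`-closure of an ideal. -/
def wClosure (I : Ideal R) : Ideal R where
  carrier := {x | ∃ J : Ideal R, IsGVIdeal R J ∧ ∀ j ∈ J, j * x ∈ I}
  zero_mem' := ⟨⊤, gv_top, by simp⟩
  add_mem' := by
    rintro a b ⟨J1, h1, ha⟩ ⟨J2, h2, hb⟩
    refine ⟨J1 * J2, gv_mul h1 h2, ?_⟩
    intro j hj
    induction hj using Submodule.mul_induction_on' with
    | mem_mul_mem u hu v hv =>
      have h1' : v * (u * a) ∈ I := I.mul_mem_left v (ha u hu)
      have h2' : u * (v * b) ∈ I := I.mul_mem_left u (hb v hv)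
      have : (u * v) * (a + b) = v * (u * a) + u * (v * b) := by ring
      rw [this]
      exact I.add_mem h1' h2'
    | add x hx y hy ihx ihy =>
      have : (x + y) * (a + b) = x * (a + b) + y * (a + b) := by ring
      rw [this]
      exact I.add_mem ihx ihy
  smul_mem' := by
    rintro c x ⟨J, hJ, hx⟩
    refine ⟨J, hJ, fun j hj => ?_⟩
    have : j * (c • x) = c * (j * x) := by simp [smul_eq_mul]; ring
    rw [this]
    exact I.mul_mem_left c (hx j hj)

lemma le_wClosure (I : Ideal R) : I ≤ wClosure I :=
  fun x hx => ⟨⊤, gv_top, fun j _ => I.mul_mem_left j hx⟩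

lemma mem_wClosure {I : Ideal R} {x : R} :
    x ∈ wClosure I ↔ ∃ J : Ideal R, IsGVIdeal R J ∧ ∀ j ∈ J, j * x ∈ I := Iff.rfl

/-- All multiples land in an ideal, from span generators. -/
lemma mul_mem_of_span {I : Ideal R} {s : Set R} {x : R}
    (h : ∀ a ∈ s, a * x ∈ I) : ∀ j ∈ Ideal.span s, j * x ∈ I := by
  intro j hj
  have : Ideal.span s ≤ Submodule.comap (LinearMap.mulLeft R x) I := by
    rw [Ideal.span_le]
    intro a ha
    simpa [Submodule.mem_comap, LinearMap.mulLeft_apply, mul_comm] using h a ha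
  have := this hj
  simpa [Submodule.mem_comap, LinearMap.mulLeft_apply, mul_comm] using this

lemma isWIdeal_wClosure (I : Ideal R) : IsWIdeal R (wClosure I) := by
  classical
  rintro x ⟨J, hJ, hJx⟩
  obtain ⟨s, hs⟩ := hJ.1
  choose F hFgv hFmem using fun (a : {a // a ∈ s}) =>
    (hJx a.1 (by rw [← hs]; exact Submodule.subset_span a.2) : a.1 * x ∈ wClosure I)
  set P : Ideal R := ∏ a ∈ s.attach, F a with hP
  have hPgv : IsGVIdeal R P := gv_prod _ _ (fun a _ => hFgv a)
  refine ⟨J * P, gv_mul hJ hPgv, ?_⟩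
  intro k hk
  induction hk using Submodule.mul_induction_on' with
  | mem_mul_mem j hj p hp =>
    have key : ∀ b ∈ J, b * (p * x) ∈ I := by
      rw [← hs]
      apply mul_mem_of_span
      intro a ha
      have hpF : p ∈ F ⟨a, ha⟩ := by
        have : P ≤ F ⟨a, ha⟩ :=
          le_trans Ideal.prod_le_inf (Finset.inf_le (s.mem_attach ⟨a, ha⟩))
        exact this hp
      have : p * (a * x) ∈ I := hFmem ⟨a, ha⟩ p hpF
      have e : a * (p * x) = p * (a * x) := by ring
      rw [e]; exact this
    have := key j hj
    have e : (j * p) * x = j * (p * x) := by ring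
    rw [e]; exact this
  | add y hy z hz ihy ihz =>
    have : (y + z) * x = y * x + z * x := by ring
    rw [this]; exact I.add_mem ihy ihz

lemma isWIdeal_bot [Nontrivial R] : IsWIdeal R (⊥ : Ideal R) := by
  rintro x ⟨J, hJ, hx⟩
  have : x = 0 := gv_eq_zero hJ (fun j hj => by simpa using hx j hj)
  simpa using this

/-- A GV-ideal is not contained in any proper w-ideal. -/
lemma gv_not_le_wIdeal {J I : Ideal R} (hJ : IsGVIdeal R J) (hI : IsWIdeal R I)
    (hne : I ≠ ⊤) : ¬ J ≤ I := by
  intro hle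
  apply hne
  rw [Ideal.eq_top_iff_one]
  exact hI 1 ⟨J, hJ, fun j hj => by simpa using hle hj⟩

end Aux3



section Aux4

variable {R : Type u} [CommRing R]

lemma exists_maxWIdeal [Nontrivial R] : ∃ m : Ideal R, IsMaxWIdeal R m := by
  classical
  set S : Set (Ideal R) := {I | IsWIdeal R I ∧ I ≠ ⊤} with hS
  have hbot : (⊥ : Ideal R) ∈ S := ⟨isWIdeal_bot, by simp⟩
  have chain_cond : ∀ c ⊆ S, IsChain (· ≤ ·) c → ∀ y ∈ c,
      ∃ ub ∈ S, ∀ z ∈ c, z ≤ ub := by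
    intro c hcS hchain y hy
    refine ⟨sSup c, ⟨?_, ?_⟩, fun z hz => le_sSup hz⟩
    · -- sSup of a chain of w-ideals is a w-ideal
      rintro x ⟨J, hJ, hJx⟩
      obtain ⟨s, hs⟩ := hJ.1
      -- find a single member of the chain containing all a * x for a ∈ s
      have key : ∀ u : Finset R, (∀ a ∈ u, a * x ∈ sSup c) →
          ∃ I ∈ c, ∀ a ∈ u, a * x ∈ I := by
        intro u hu
        induction u using Finset.induction_on with
        | empty => exact ⟨y, hy, by simp⟩
        | insert _ _ hnot ih =>
          rename_i a t
          obtain ⟨I, hIc, hI⟩ := ih (fun b hb => hu b (Finset.mem_insert_of_mem hb))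
          have hax : a * x ∈ sSup c := hu a (Finset.mem_insert_self a t)
          obtain ⟨I', hI'c, haI'⟩ :=
            (Submodule.mem_sSup_of_directed ⟨y, hy⟩ hchain.directedOn).1 hax
          rcases hchain.total hIc hI'c with hle | hle
          · exact ⟨I', hI'c, fun b hb => by
              rcases Finset.mem_insert.1 hb with rfl | hb
              · exact haI'
              · exact hle (hI b hb)⟩
          · exact ⟨I, hIc, fun b hb => by
              rcases Finset.mem_insert.1 hb with rfl | hb
              · exact hle haI'
              · exact hI b hb⟩
      obtain ⟨I, hIc, hI⟩ := key s (fun a ha => hJx a (by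
        rw [← hs]; exact Submodule.subset_span ha))
      have hxI : x ∈ I := by
        refine (hcS hIc).1 x ⟨J, hJ, ?_⟩
        rw [← hs]
        exact mul_mem_of_span hI
      exact le_sSup hIc hxI
    · -- sSup of a chain of proper ideals is proper
      intro htop
      have h1 : (1 : R) ∈ sSup c := htop ▸ Submodule.mem_top
      obtain ⟨I, hIc, h1I⟩ :=
        (Submodule.mem_sSup_of_directed ⟨y, hy⟩ hchain.directedOn).1 h1
      exact (hcS hIc).2 ((Ideal.eq_top_iff_one I).2 h1I)
  obtain ⟨m, -, hm⟩ := zorn_le_nonempty₀ S chain_cond ⊥ hbot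
  refine ⟨m, hm.prop.1, hm.prop.2, fun I hIw hIne hle => ?_⟩
  exact le_antisymm (hm.le_of_ge ⟨hIw, hIne⟩ hle) hle

lemma maxWIdeal_isPrime {m : Ideal R} (hm : IsMaxWIdeal R m) : m.IsPrime := by
  constructor
  · exact hm.2.1
  · intro a b hab
    by_contra hcon
    push_neg at hcon
    obtain ⟨ha, hb⟩ := hcon
    have key : ∀ x : R, x ∉ m → ∃ J : Ideal R, IsGVIdeal R J ∧
        J ≤ m ⊔ Ideal.span {x} := by
      intro x hx
      set I := wClosure (m ⊔ Ideal.span {x}) with hI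
      have hmI : m ≤ I := le_trans le_sup_left (le_wClosure _)
      have hxI : x ∈ I := le_wClosure _ (Submodule.mem_sup_right
        (Submodule.mem_span_singleton_self x))
      have hItop : I = ⊤ := by
        by_contra hne
        have := hm.2.2 I (isWIdeal_wClosure _) hne hmI
        rw [this] at hxI
        exact hx hxI
      have h1 : (1 : R) ∈ I := hItop ▸ Submodule.mem_top
      obtain ⟨J, hJgv, hJ⟩ := h1
      exact ⟨J, hJgv, fun j hj => by simpa using hJ j hj⟩
    obtain ⟨J1, h1gv, h1le⟩ := key a ha
    obtain ⟨J2, h2gv, h2le⟩ := key b hb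
    have hprod : J1 * J2 ≤ m := by
      rw [Ideal.mul_le]
      intro u hu v hv
      obtain ⟨m1, hm1, ra, hra, hu'⟩ := Submodule.mem_sup.1 (h1le hu)
      obtain ⟨m2, hm2, rb, hrb, hv'⟩ := Submodule.mem_sup.1 (h2le hv)
      obtain ⟨r, hr⟩ := Ideal.mem_span_singleton'.1 hra
      obtain ⟨t, ht⟩ := Ideal.mem_span_singleton'.1 hrb
      have : u * v = m1 * v + m2 * (r * a) + (r * t) * (a * b) := by
        rw [← hu', ← hv', ← hr, ← ht]; ring
      rw [this]
      exact m.add_mem (m.add_mem (m.mul_mem_right v hm1)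
        (m.mul_mem_right _ hm2)) (m.mul_mem_left _ hab)
    have : (1 : R) ∈ m := hm.1 1 ⟨J1 * J2, gv_mul h1gv h2gv,
      fun j hj => by simpa using hprod hj⟩
    exact hm.2.1 ((Ideal.eq_top_iff_one m).2 this)

end Aux4


section Aux5

variable {R : Type u} [CommRing R]

lemma localizedModule_subsingleton {J m : Ideal R} (hJ : IsGVIdeal R J)
    (hm : IsMaxWIdeal R m) [m.IsPrime] :
    Subsingleton (LocalizedModule m.primeCompl (R ⧸ J)) := by
  have hnle : ¬ J ≤ m := gv_not_le_wIdeal hJ hm.1 hm.2.1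
  obtain ⟨s, hsJ, hsm⟩ := SetLike.not_le_iff_exists.1 hnle
  have hsm' : s ∈ m.primeCompl := hsm
  have h0 : ∀ z : LocalizedModule m.primeCompl (R ⧸ J), z = 0 := by
    intro z
    induction z using LocalizedModule.induction_on with
    | _ x t =>
      have hsx : (⟨s, hsm'⟩ : m.primeCompl) • x = 0 := by
        obtain ⟨x', rfl⟩ := Submodule.Quotient.mk_surjective J x
        have : (⟨s, hsm'⟩ : m.primeCompl) • (Submodule.Quotient.mk x' : R ⧸ J) =
            Submodule.Quotient.mk (s • x') := by
          rw [Submonoid.smul_def, ← Submodule.Quotient.mk_smul]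
        rw [this, Submodule.Quotient.mk_eq_zero]
        exact J.mul_mem_right x' hsJ
      show LocalizedModule.mk x t = 0
      rw [show (0 : LocalizedModule m.primeCompl (R ⧸ J)) =
        LocalizedModule.mk 0 1 from (LocalizedModule.zero_mk 1).symm]
      rw [LocalizedModule.mk_eq]
      exact ⟨⟨s, hsm'⟩, by rw [one_smul, hsx, smul_zero, smul_zero]⟩
  exact ⟨fun a b => by rw [h0 a, h0 b]⟩

end Aux5

/-- If every nonzero w-flat `R`-module is w-faithfully flat
(locally flat at all maximal w-ideals implies locally faithfully flat there),
then `R` is a DW-ring, i.e. the only GV-ideal of `R` is `R` itself. -/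
theorem dw_of_every_wFlat_wFaithfullyFlat (R : Type u) [CommRing R]
    (h : ∀ (M : Type u) [AddCommGroup M] [Module R M], Nontrivial M →
      (∀ (m : Ideal R), IsMaxWIdeal R m → ∀ [hp : m.IsPrime],
        Module.Flat (Localization.AtPrime m) (LocalizedModule m.primeCompl M)) →
      (∀ (m : Ideal R), IsMaxWIdeal R m → ∀ [hp : m.IsPrime],
        Module.FaithfullyFlat (Localization.AtPrime m) (LocalizedModule m.primeCompl M))) :
    ∀ J : Ideal R, IsGVIdeal R J → J = ⊤ := by
  intro J hJ
  by_contra hne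
  have : Nontrivial R := by
    rcases subsingleton_or_nontrivial R with hR | hR
    · exact absurd (Subsingleton.elim J ⊤) hne
    · exact hR
  obtain ⟨m, hm⟩ := exists_maxWIdeal (R := R)
  haveI hp : m.IsPrime := maxWIdeal_isPrime hm
  haveI : Nontrivial (R ⧸ J) :=
    Submodule.Quotient.nontrivial_iff.2 (lt_top_iff_ne_top.2 hne).ne
  have hflat : ∀ (m' : Ideal R), IsMaxWIdeal R m' → ∀ [hp' : m'.IsPrime],
      Module.Flat (Localization.AtPrime m') (LocalizedModule m'.primeCompl (R ⧸ J)) := by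
    intro m' hm' hp'
    haveI := localizedModule_subsingleton hJ hm'
    haveI : Module.Free (Localization.AtPrime m')
        (LocalizedModule m'.primeCompl (R ⧸ J)) :=
      Module.Free.of_subsingleton _ _
    exact Module.Flat.of_free
  have hFF := h (R ⧸ J) inferInstance hflat m hm
  haveI := localizedModule_subsingleton hJ hm
  obtain ⟨mm, hmm⟩ := Ideal.exists_maximal (Localization.AtPrime m)
  exact hFF.submodule_ne_top hmm (Submodule.eq_top_iff'.2 fun x => by
    rw [Subsingleton.elim x 0]; exact Submodule.zero_mem _)
end

section
/- Let R be a commutative ring, M a w-module over R, and {T_i}_{i ∈ I} a family of w-simple R-submodules of M such that M = Σ_{i ∈ I} T_i. Then: (1) for every w-submodule K of M there exists a subset J ⊆ I such that the family {T_j}_{j ∈ J} is independent (its sum is an internal direct sum) and M = K ⊕ (⊕_{j ∈ J} T_j); (2) every w-simple R-submodule T of M is isomorphic, as an R-module, to T_i for some i ∈ I. -/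
universe u v

/-- `K` is a w-submodule of `M`: whenever `J x ⊆ K` for some GV-ideal `J` (with `x ∈ M`),
then `x ∈ K`. -/
def IsWSubmodule (R : Type u) [CommRing R] {M : Type v} [AddCommGroup M] [Module R M]
    (K : Submodule R M) : Prop :=
  ∀ x : M, (∃ J : Ideal R, IsGVIdeal R J ∧ ∀ j ∈ J, j • x ∈ K) → x ∈ K

/-- `T` is a w-simple submodule of `M`: `T` is a nonzero w-submodule whose only
w-submodules (submodules of `T` closed under the relative w-operation) are `0` and `T`. -/
def IsWSimpleSubmodule (R : Type u) [CommRing R] {M : Type v} [AddCommGroup M] [Module R M]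
    (T : Submodule R M) : Prop :=
  IsWSubmodule R T ∧ T ≠ ⊥ ∧
    ∀ K : Submodule R M, K ≤ T →
      (∀ x ∈ T, (∃ J : Ideal R, IsGVIdeal R J ∧ ∀ j ∈ J, j • x ∈ K) → x ∈ K) →
        K = ⊥ ∨ K = T


section WHelpers

variable {R : Type u} [CommRing R] {M : Type v} [AddCommGroup M] [Module R M]

lemma WH.smul_cancel (hM : IsWModule R M) {J : Ideal R} (hJ : IsGVIdeal R J) {a b : M}
    (h : ∀ j ∈ J, j • a = j • b) : a = b := by
  have h0 : a - b = 0 :=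
    hM.1 _ ⟨J, hJ, fun j hj => by rw [smul_sub, h j hj, sub_self]⟩
  exact sub_eq_zero.mp h0

lemma WH.exists_smul_eq (hM : IsWModule R M) {A : Submodule R M} (hA : IsWSubmodule R A)
    {J : Ideal R} (hJ : IsGVIdeal R J) (f : J →ₗ[R] M) (hf : ∀ x : J, f x ∈ A) :
    ∃ a ∈ A, ∀ x : J, (x : R) • a = f x := by
  obtain ⟨g, hg⟩ := hM.2 J hJ f
  have key : ∀ x : J, (x : R) • g 1 = f x := by
    intro x
    rw [← map_smul, smul_eq_mul, mul_one, hg x]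
  refine ⟨g 1, ?_, key⟩
  exact hA _ ⟨J, hJ, fun j hj => by rw [key ⟨j, hj⟩]; exact hf ⟨j, hj⟩⟩

lemma WH.bot_wsubmodule (hM : IsWModule R M) : IsWSubmodule R (⊥ : Submodule R M) := by
  intro x ⟨J, hJ, hx⟩
  have := hM.1 x ⟨J, hJ, fun j hj => by simpa using hx j hj⟩
  simpa using this

lemma WH.disjoint_modular {A B C : Submodule R M} (hAB : Disjoint A B)
    (hC : Disjoint C (A ⊔ B)) : Disjoint A (B ⊔ C) := by
  rw [disjoint_iff] at hAB hC ⊢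
  have h1 : (B ⊔ C) ⊓ (A ⊔ B) = B := by
    rw [sup_inf_assoc_of_le C (le_sup_right : B ≤ A ⊔ B), hC, sup_bot_eq]
  have h2 : A ⊓ (B ⊔ C) ≤ B := by
    calc A ⊓ (B ⊔ C) ≤ (A ⊔ B) ⊓ (B ⊔ C) := inf_le_inf le_sup_left le_rfl
    _ = B := by rw [inf_comm, h1]
  have : A ⊓ (B ⊔ C) ≤ ⊥ := by
    rw [← hAB]; exact le_inf inf_le_left h2
  exact le_bot_iff.mp this

lemma WH.sup_wsubmodule (hM : IsWModule R M) {A B : Submodule R M}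
    (hA : IsWSubmodule R A) (hB : IsWSubmodule R B) (hAB : Disjoint A B) :
    IsWSubmodule R (A ⊔ B) := by
  intro x ⟨J, hJ, hx⟩
  have key : ∀ j : J, ∃ p : M × M, p.1 ∈ A ∧ p.2 ∈ B ∧ p.1 + p.2 = (j : R) • x := by
    intro j
    obtain ⟨a, ha, b, hb, hab⟩ := Submodule.mem_sup.mp (hx (j : R) j.2)
    exact ⟨(a, b), ha, hb, hab⟩
  choose p hpA hpB hp using key
  have uniq : ∀ (j : J) (a b : M), a ∈ A → b ∈ B → a + b = (j : R) • x →
      a = (p j).1 ∧ b = (p j).2 := by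
    intro j a b ha hb hab
    have h1 : a - (p j).1 = (p j).2 - b := by
      have h2 : a + b = (p j).1 + (p j).2 := hab.trans (hp j).symm
      have : a + b - ((p j).1 + b) = (p j).1 + (p j).2 - ((p j).1 + b) := by rw [h2]
      calc a - (p j).1 = a + b - ((p j).1 + b) := by abel
      _ = (p j).1 + (p j).2 - ((p j).1 + b) := this
      _ = (p j).2 - b := by abel
    have hA' : a - (p j).1 ∈ A := sub_mem ha (hpA j)
    have hB' : a - (p j).1 ∈ B := h1 ▸ sub_mem (hpB j) hb
    have h0 : a - (p j).1 = 0 := by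
      have := hAB.le_bot (Submodule.mem_inf.mpr ⟨hA', hB'⟩)
      simpa using this
    have ha1 : a = (p j).1 := by
      have := sub_eq_zero.mp h0; exact this
    refine ⟨ha1, ?_⟩
    have : b - (p j).2 = 0 := by
      have h2 : a + b = (p j).1 + (p j).2 := hab.trans (hp j).symm
      rw [ha1] at h2
      have := add_left_cancel h2
      rw [this, sub_self]
    exact sub_eq_zero.mp this
  have hadd : ∀ j j' : J, (p (j + j')).1 = (p j).1 + (p j').1 := by
    intro j j'
    refine ((uniq (j + j') ((p j).1 + (p j').1) ((p j).2 + (p j').2)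
      (add_mem (hpA j) (hpA j')) (add_mem (hpB j) (hpB j')) ?_).1).symm
    have : ((j : R) + (j' : R)) • x = (j : R) • x + (j' : R) • x := add_smul _ _ _
    calc (p j).1 + (p j').1 + ((p j).2 + (p j').2)
        = ((p j).1 + (p j).2) + ((p j').1 + (p j').2) := by abel
    _ = (j : R) • x + (j' : R) • x := by rw [hp j, hp j']
    _ = ((j + j' : J) : R) • x := by rw [Submodule.coe_add, add_smul]
  have hsmul : ∀ (r : R) (j : J), (p (r • j)).1 = r • (p j).1 := by
    intro r j
    refine ((uniq (r • j) (r • (p j).1) (r • (p j).2)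
      (Submodule.smul_mem _ r (hpA j)) (Submodule.smul_mem _ r (hpB j)) ?_).1).symm
    calc r • (p j).1 + r • (p j).2 = r • ((p j).1 + (p j).2) := (smul_add _ _ _).symm
    _ = r • ((j : R) • x) := by rw [hp j]
    _ = ((r • j : J) : R) • x := by
        rw [Submodule.coe_smul, smul_smul, smul_eq_mul]
  let fA : J →ₗ[R] M :=
    { toFun := fun j => (p j).1
      map_add' := hadd
      map_smul' := fun r j => hsmul r j }
  let fB : J →ₗ[R] M :=
    { toFun := fun j => (p j).2
      map_add' := by
        intro j j'
        have h := hadd j j'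
        have h2 := hp (j + j')
        have h3 : (p j).1 + (p j').1 + (p (j+j')).2 = ((j + j' : J) : R) • x := by
          rw [← h]; exact h2
        have h4 : (p j).1 + (p j').1 + ((p j).2 + (p j').2) = ((j + j' : J) : R) • x := by
          calc (p j).1 + (p j').1 + ((p j).2 + (p j').2)
              = ((p j).1 + (p j).2) + ((p j').1 + (p j').2) := by abel
          _ = (j : R) • x + (j' : R) • x := by rw [hp j, hp j']
          _ = ((j + j' : J) : R) • x := by rw [Submodule.coe_add, add_smul]
        exact add_left_cancel (h3.trans h4.symm)
      map_smul' := by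
        intro r j
        have h := hsmul r j
        have h2 := hp (r • j)
        have h3 : r • (p j).1 + (p (r • j)).2 = ((r • j : J) : R) • x := by
          rw [← h]; exact h2
        have h4 : r • (p j).1 + r • (p j).2 = ((r • j : J) : R) • x := by
          calc r • (p j).1 + r • (p j).2 = r • ((p j).1 + (p j).2) := (smul_add _ _ _).symm
          _ = r • ((j : R) • x) := by rw [hp j]
          _ = ((r • j : J) : R) • x := by rw [Submodule.coe_smul, smul_smul, smul_eq_mul]
        exact add_left_cancel (h3.trans h4.symm) }
  obtain ⟨a, haA, ha⟩ := WH.exists_smul_eq hM hA hJ fA (fun j => hpA j)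
  obtain ⟨b, hbB, hb⟩ := WH.exists_smul_eq hM hB hJ fB (fun j => hpB j)
  have : a + b = x := by
    refine WH.smul_cancel hM hJ (fun j hj => ?_)
    have h1 : j • (a + b) = (p ⟨j, hj⟩).1 + (p ⟨j, hj⟩).2 := by
      rw [smul_add]
      rw [show j • a = (p ⟨j, hj⟩).1 from ha ⟨j, hj⟩, show j • b = (p ⟨j, hj⟩).2 from hb ⟨j, hj⟩]
    rw [h1, hp ⟨j, hj⟩]
  rw [← this]
  exact Submodule.add_mem_sup haA hbB

end WHelpers

section WHelpers2

variable {R : Type u} [CommRing R] {M : Type v} [AddCommGroup M] [Module R M]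
variable {ι : Type*}

lemma WH.biSup_sdiff_singleton (T : ι → Submodule R M) {s : Set ι} (i : ι) (hi : i ∈ s) :
    (⨆ (j : s) (_ : j ≠ (⟨i, hi⟩ : s)), T j.1) = ⨆ j ∈ s \ {i}, T j := by
  apply le_antisymm
  · refine iSup₂_le fun j hj => ?_
    exact le_iSup₂ (f := fun (k : ι) (_ : k ∈ s \ {i}) => T k) j.1
      ⟨j.2, fun h => hj (Subtype.ext h)⟩
  · refine iSup₂_le fun j hj => ?_
    exact le_iSup₂ (f := fun (k : s) (_ : k ≠ (⟨i, hi⟩ : s)) => T k.1) ⟨j, hj.1⟩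
      (fun h => hj.2 (congrArg Subtype.val h))

lemma WH.mem_biSup_finset {T : ι → Submodule R M} {s : Set ι} {x : M}
    (hx : x ∈ ⨆ j ∈ s, T j) : ∃ F : Finset ι, ↑F ⊆ s ∧ x ∈ ⨆ j ∈ F, T j := by
  classical
  rw [iSup_subtype'] at hx
  obtain ⟨Fs, hFs⟩ := Submodule.mem_iSup_iff_exists_finset.mp hx
  refine ⟨Fs.image Subtype.val, ?_, ?_⟩
  · intro j hj
    simp only [Finset.coe_image, Set.mem_image] at hj
    obtain ⟨a, _, rfl⟩ := hj
    exact a.2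
  · refine (iSup₂_le fun j hj => ?_ : (⨆ j ∈ Fs, T j.1) ≤ _) hFs
    exact le_iSup₂ (f := fun (k : ι) (_ : k ∈ Fs.image Subtype.val) => T k) j.1
      (Finset.mem_image_of_mem _ hj)

lemma WH.finset_subset_chain {c : Set (Set ι)} (hc : IsChain (· ⊆ ·) c) (hne : c.Nonempty) :
    ∀ F : Finset ι, ↑F ⊆ ⋃₀ c → ∃ t ∈ c, ↑F ⊆ t := by
  classical
  intro F
  induction F using Finset.induction_on with
  | empty => exact fun _ => ⟨hne.choose, hne.choose_spec, by simp⟩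
  | insert _ _ hi =>
    rename_i i F ih
    intro hsub
    obtain ⟨t1, ht1c, ht1⟩ := ih (fun x hx => hsub (by simp [hx]))
    obtain ⟨t2, ht2c, hit2⟩ := hsub (Finset.mem_coe.mpr (Finset.mem_insert_self i F))
    rcases hc.total ht1c ht2c with h | h
    · exact ⟨t2, ht2c, by
        intro x hx
        rcases Finset.mem_insert.mp (Finset.mem_coe.mp hx) with rfl | hxF
        · exact hit2
        · exact h (ht1 hxF)⟩
    · exact ⟨t1, ht1c, by
        intro x hx
        rcases Finset.mem_insert.mp (Finset.mem_coe.mp hx) with rfl | hxF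
        · exact h hit2
        · exact ht1 hxF⟩

lemma WH.sum_wsubmodule (hM : IsWModule R M) {K : Submodule R M} (hK : IsWSubmodule R K)
    {T : ι → Submodule R M} (hT : ∀ i, IsWSubmodule R (T i)) {s : Set ι}
    (hdisj : Disjoint K (⨆ j ∈ s, T j)) (hind : iSupIndep fun j : s => T j.1) :
    IsWSubmodule R (K ⊔ ⨆ j ∈ s, T j) := by
  classical
  have claim1 : ∀ F : Finset ι, ↑F ⊆ s → IsWSubmodule R (K ⊔ ⨆ j ∈ F, T j) := by
    intro F
    induction F using Finset.induction_on with
    | empty => intro _; simpa using hK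
    | insert _ _ hi =>
      rename_i i F ih
      intro hsub
      have hFs : ↑F ⊆ s := fun x hx => hsub (by simp [hx])
      have his : i ∈ s := hsub (by simp)
      have hle : (⨆ j ∈ F, T j) ≤ ⨆ j ∈ s \ {i}, T j := by
        refine iSup₂_le fun j hj => ?_
        exact le_iSup₂ (f := fun (k : ι) (_ : k ∈ s \ {i}) => T k) j
          ⟨hFs hj, fun h => hi (h ▸ hj)⟩
      have h1 : Disjoint (T i) (⨆ j ∈ F, T j) := by
        have := hind ⟨i, his⟩
        rw [WH.biSup_sdiff_singleton T i his] at this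
        exact this.mono_right hle
      have h2 : Disjoint K (T i ⊔ ⨆ j ∈ F, T j) := by
        refine hdisj.mono_right (sup_le ?_ ?_)
        · exact le_iSup₂ (f := fun (k : ι) (_ : k ∈ s) => T k) i his
        · exact iSup₂_le fun j hj => le_iSup₂ (f := fun (k : ι) (_ : k ∈ s) => T k) j (hFs hj)
      have h3 : Disjoint (T i) ((⨆ j ∈ F, T j) ⊔ K) := WH.disjoint_modular h1 h2
      have heq : K ⊔ ⨆ j ∈ (insert i F : Finset ι), T j = (K ⊔ ⨆ j ∈ F, T j) ⊔ T i := by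
        rw [Finset.iSup_insert]
        rw [sup_comm (T i) _, ← sup_assoc]
      rw [heq]
      refine WH.sup_wsubmodule hM (ih hFs) (hT i) ?_
      exact (h3.mono_right (le_of_eq (sup_comm K _))).symm
  intro x ⟨J, hJ, hx⟩
  obtain ⟨G, hG⟩ := hJ.1
  have hGmem : ∀ g ∈ G, g ∈ J := fun g hg => hG ▸ Ideal.subset_span hg
  have hFg : ∀ g : {g // g ∈ G}, ∃ F : Finset ι, ↑F ⊆ s ∧
      (g : R) • x ∈ K ⊔ ⨆ j ∈ F, T j := by
    intro g
    obtain ⟨k, hk, z, hz, hkz⟩ := Submodule.mem_sup.mp (hx g (hGmem g g.2))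
    obtain ⟨F, hFs, hzF⟩ := WH.mem_biSup_finset hz
    exact ⟨F, hFs, by rw [← hkz]; exact Submodule.add_mem_sup hk hzF⟩
  choose Fg hFg1 hFg2 using hFg
  let F : Finset ι := Finset.univ.sup Fg
  have hFsub : ↑F ⊆ s := by
    intro j hj
    obtain ⟨g, _, hg⟩ := Finset.mem_sup.mp hj
    exact hFg1 g hg
  have hmono : ∀ g : {g // g ∈ G}, (K ⊔ ⨆ j ∈ Fg g, T j) ≤ K ⊔ ⨆ j ∈ F, T j := by
    intro g
    refine sup_le_sup_left (iSup₂_le fun j hj => ?_) K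
    exact le_iSup₂ (f := fun (k : ι) (_ : k ∈ F) => T k) j
      (Finset.mem_sup.mpr ⟨g, Finset.mem_univ g, hj⟩)
  have hxF : ∀ j ∈ J, j • x ∈ K ⊔ ⨆ j ∈ F, T j := by
    intro j hj
    rw [← hG] at hj
    induction hj using Submodule.span_induction with
    | mem g hg => exact hmono ⟨g, hg⟩ (hFg2 ⟨g, hg⟩)
    | zero => rw [zero_smul]; exact zero_mem _
    | add r r' _ _ h1 h2 => rw [add_smul]; exact add_mem h1 h2
    | smul a r _ h1 => rw [smul_eq_mul, mul_smul]; exact Submodule.smul_mem _ a h1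
  have hxin : x ∈ K ⊔ ⨆ j ∈ F, T j := claim1 F hFsub x ⟨J, hJ, hxF⟩
  refine (sup_le_sup_left (iSup₂_le fun j hj => ?_) K) hxin
  exact le_iSup₂ (f := fun (k : ι) (_ : k ∈ s) => T k) j (hFsub hj)

end WHelpers2

section WHelpers3

variable {R : Type u} [CommRing R] {M : Type v} [AddCommGroup M] [Module R M]
variable {ι : Type*}

lemma WH.biSup_le_of_subset {T : ι → Submodule R M} {s t : Set ι} (h : s ⊆ t) :
    (⨆ j ∈ s, T j) ≤ ⨆ j ∈ t, T j :=
  iSup₂_le fun j hj => le_iSup₂ (f := fun (k : ι) (_ : k ∈ t) => T k) j (h hj)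

lemma WH.part1 (hM : IsWModule R M) (T : ι → Submodule R M)
    (hsimple : ∀ i, IsWSimpleSubmodule R (T i)) (hsum : (⨆ i, T i) = ⊤)
    (K : Submodule R M) (hK : IsWSubmodule R K) :
    ∃ s : Set ι, (iSupIndep fun j : s => T j.1) ∧
      Disjoint K (⨆ j ∈ s, T j) ∧ K ⊔ (⨆ j ∈ s, T j) = ⊤ := by
  classical
  set P : Set (Set ι) :=
    {s | Disjoint K (⨆ j ∈ s, T j) ∧ iSupIndep fun j : s => T j.1} with hP
  have hempty : (∅ : Set ι) ∈ P := by
    constructor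
    · simp
    · exact fun j => absurd j.2 (Set.notMem_empty _)
  have hchain : ∀ c ⊆ P, IsChain (· ⊆ ·) c → c.Nonempty →
      ∃ ub ∈ P, ∀ s ∈ c, s ⊆ ub := by
    intro c hcP hc hcne
    refine ⟨⋃₀ c, ⟨?_, ?_⟩, fun s hs => Set.subset_sUnion_of_mem hs⟩
    · rw [Submodule.disjoint_def]
      intro x hxK hxS
      obtain ⟨F, hFU, hxF⟩ := WH.mem_biSup_finset hxS
      obtain ⟨t, htc, hFt⟩ := WH.finset_subset_chain hc hcne F hFU
      have : x ∈ ⨆ j ∈ t, T j := WH.biSup_le_of_subset hFt hxF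
      exact Submodule.disjoint_def.mp (hcP htc).1 x hxK this
    · intro j0
      have hj0U : (j0 : ι) ∈ ⋃₀ c := j0.2
      rw [show (j0 : ↥(⋃₀ c)) = ⟨j0.1, j0.2⟩ from rfl,
        WH.biSup_sdiff_singleton T j0.1 j0.2]
      rw [Submodule.disjoint_def]
      intro x hxT hxS
      obtain ⟨F, hFU, hxF⟩ := WH.mem_biSup_finset hxS
      have hFU' : ↑F ⊆ ⋃₀ c := fun y hy => (hFU hy).1
      obtain ⟨t1, ht1c, hFt1⟩ := WH.finset_subset_chain hc hcne F hFU'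
      obtain ⟨t0, ht0c, hj0t0⟩ := hj0U
      rcases hc.total ht0c ht1c with h | h
      · have hj0t1 : (j0 : ι) ∈ t1 := h hj0t0
        have hFt : ↑F ⊆ t1 \ {(j0 : ι)} := fun y hy => ⟨hFt1 hy, (hFU hy).2⟩
        have hdisj := (hcP ht1c).2 ⟨j0.1, hj0t1⟩
        rw [WH.biSup_sdiff_singleton T j0.1 hj0t1] at hdisj
        have : x ∈ ⨆ j ∈ t1 \ {(j0 : ι)}, T j := WH.biSup_le_of_subset hFt hxF
        exact Submodule.disjoint_def.mp hdisj x hxT this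
      · have hFt : ↑F ⊆ t0 \ {(j0 : ι)} := fun y hy => ⟨h (hFt1 hy), (hFU hy).2⟩
        have hdisj := (hcP ht0c).2 ⟨j0.1, hj0t0⟩
        rw [WH.biSup_sdiff_singleton T j0.1 hj0t0] at hdisj
        have : x ∈ ⨆ j ∈ t0 \ {(j0 : ι)}, T j := WH.biSup_le_of_subset hFt hxF
        exact Submodule.disjoint_def.mp hdisj x hxT this
  obtain ⟨m, -, hmax⟩ := zorn_subset_nonempty P hchain ∅ hempty
  have hmP : m ∈ P := hmax.prop
  set N : Submodule R M := K ⊔ ⨆ j ∈ m, T j with hN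
  have hNw : IsWSubmodule R N := WH.sum_wsubmodule hM hK (fun i => (hsimple i).1) hmP.1 hmP.2
  have hTN : ∀ i, T i ≤ N := by
    intro i
    have hclosed : ∀ x ∈ T i, (∃ J : Ideal R, IsGVIdeal R J ∧ ∀ j ∈ J, j • x ∈ T i ⊓ N) →
        x ∈ T i ⊓ N := by
      intro x hxT ⟨J, hJ, hx⟩
      exact Submodule.mem_inf.mpr ⟨hxT, hNw x ⟨J, hJ, fun j hj =>
        (Submodule.mem_inf.mp (hx j hj)).2⟩⟩
    rcases (hsimple i).2.2 (T i ⊓ N) inf_le_left hclosed with h | h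
    · -- T i ⊓ N = ⊥ : contradiction with maximality
      exfalso
      have hd : Disjoint (T i) N := disjoint_iff.mpr h
      have him : i ∉ m := by
        intro him
        have hle : T i ≤ N :=
          le_sup_of_le_right (le_iSup₂ (f := fun (k : ι) (_ : k ∈ m) => T k) i him)
        exact (hsimple i).2.1 (le_bot_iff.mp (h ▸ le_inf le_rfl hle))
      have hm' : insert i m ∈ P := by
        constructor
        · rw [iSup_insert]
          have := WH.disjoint_modular (A := K) (B := ⨆ j ∈ m, T j) (C := T i)
            hmP.1 (by rw [← hN]; exact hd)
          exact this.mono_right (le_of_eq (sup_comm _ _))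
        · intro j0
          rw [show j0 = (⟨j0.1, j0.2⟩ : ↥(insert i m)) from rfl,
            WH.biSup_sdiff_singleton T j0.1 j0.2]
          by_cases hj0i : j0.1 = i
          · show Disjoint (T j0.1) (⨆ j ∈ insert (i : ι) m \ {j0.1}, T j)
            rw [hj0i, Set.insert_diff_self_of_notMem him]
            exact hd.mono_right le_sup_right
          · have hj0m : j0.1 ∈ m := by
              rcases Set.mem_insert_iff.mp j0.2 with h' | h'
              · exact absurd h' hj0i
              · exact h'
            have heq : insert i m \ {j0.1} = insert i (m \ {j0.1}) :=
              (Set.insert_diff_singleton_comm (fun h' => hj0i h'.symm) m).symm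
            show Disjoint (T j0.1) (⨆ j ∈ insert (i : ι) m \ {j0.1}, T j)
            rw [heq, iSup_insert]
            have hAB : Disjoint (T j0.1) (⨆ j ∈ m \ {j0.1}, T j) := by
              have := hmP.2 ⟨j0.1, hj0m⟩
              rwa [WH.biSup_sdiff_singleton T j0.1 hj0m] at this
            have hsupeq : T j0.1 ⊔ (⨆ j ∈ m \ {j0.1}, T j) = ⨆ j ∈ m, T j := by
              rw [← iSup_insert, Set.insert_diff_singleton,
                Set.insert_eq_self.mpr hj0m]
            have hC : Disjoint (T i) (T j0.1 ⊔ ⨆ j ∈ m \ {j0.1}, T j) := by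
              rw [hsupeq]
              exact hd.mono_right le_sup_right
            have := WH.disjoint_modular hAB hC
            exact this.mono_right (le_of_eq (sup_comm _ _))
      have : insert i m ⊆ m := hmax.2 hm' (Set.subset_insert i m)
      exact him (this (Set.mem_insert i m))
    · exact h ▸ inf_le_right
  have htop : (⊤ : Submodule R M) ≤ N := hsum ▸ iSup_le hTN
  exact ⟨m, hmP.2, hmP.1, le_antisymm le_top htop⟩

end WHelpers3

/-- If a w-module `M` is the sum of a family `{T_i}` of w-simple
submodules, then (1) for every w-submodule `K` of `M` there is a subset `J ⊆ I`
with `{T_j}_{j ∈ J}` independent and `M = K ⊕ (⊕_{j ∈ J} T_j)`, and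
(2) every w-simple submodule of `M` is isomorphic to some `T_i`. -/
theorem wSemisimple_complement_and_iso (R : Type u) [CommRing R] (M : Type u)
    [AddCommGroup M] [Module R M] (hM : IsWModule R M) {ι : Type u}
    (T : ι → Submodule R M) (hsimple : ∀ i, IsWSimpleSubmodule R (T i))
    (hsum : (⨆ i, T i) = ⊤) :
    (∀ K : Submodule R M, IsWSubmodule R K →
      ∃ s : Set ι, (iSupIndep fun j : s => T j.1) ∧
        Disjoint K (⨆ j ∈ s, T j) ∧ K ⊔ (⨆ j ∈ s, T j) = ⊤) ∧
    (∀ T' : Submodule R M, IsWSimpleSubmodule R T' →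
      ∃ i : ι, Nonempty (T' ≃ₗ[R] T i)) := by
  constructor
  · exact fun K hK => WH.part1 hM T hsimple hsum K hK
  · intro T' hT'
    obtain ⟨s, hind, hdisj, hsup⟩ := WH.part1 hM T hsimple hsum T' hT'.1
    set P : Submodule R M := ⨆ j ∈ s, T j with hPdef
    have hPw : IsWSubmodule R P := by
      have := WH.sum_wsubmodule hM (WH.bot_wsubmodule hM) (fun i => (hsimple i).1)
        (disjoint_bot_left : Disjoint ⊥ P) hind
      rwa [bot_sup_eq] at this
    have hcompl : IsCompl T' P := ⟨hdisj, codisjoint_iff.mpr hsup⟩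
    let e : (M ⧸ P) ≃ₗ[R] T' := Submodule.quotientEquivOfIsCompl P T' hcompl.symm
    -- find i with T i not contained in P
    have hex : ∃ i, ¬ T i ≤ P := by
      by_contra hall
      push_neg at hall
      have htopP : (⊤ : Submodule R M) ≤ P := hsum ▸ iSup_le hall
      have hT'bot : T' ≤ ⊥ := le_trans (le_inf le_rfl (le_top.trans htopP)) hdisj.le_bot
      exact hT'.2.1 (le_bot_iff.mp hT'bot)
    obtain ⟨i, hiP⟩ := hex
    let φ : T i →ₗ[R] T' := e.toLinearMap ∘ₗ (P.mkQ ∘ₗ (T i).subtype)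
    have hkey : ∀ t : T i, ((φ t : M) - (t : M)) ∈ P := by
      intro t
      have h1 : Submodule.Quotient.mk (p := P) ((φ t : M)) = Submodule.Quotient.mk (t : M) := by
        show (Submodule.Quotient.mk (↑(e (P.mkQ ↑t)) : M) : M ⧸ P) = _
        rw [← Submodule.quotientEquivOfIsCompl_symm_apply P T' hcompl.symm,
          LinearEquiv.symm_apply_apply]
        rfl
      exact (Submodule.Quotient.eq P).mp h1
    have hbot : T i ⊓ P = ⊥ := by
      have hclosed : ∀ x ∈ T i, (∃ J : Ideal R, IsGVIdeal R J ∧ ∀ j ∈ J, j • x ∈ T i ⊓ P) →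
          x ∈ T i ⊓ P := by
        intro x hxT ⟨J, hJ, hx⟩
        exact Submodule.mem_inf.mpr ⟨hxT, hPw x ⟨J, hJ, fun j hj =>
          (Submodule.mem_inf.mp (hx j hj)).2⟩⟩
      rcases (hsimple i).2.2 (T i ⊓ P) inf_le_left hclosed with h | h
      · exact h
      · exact absurd (h ▸ inf_le_right) hiP
    have hφinj : Function.Injective φ := by
      intro t t' htt
      have h1 : ((t : M) - (t' : M)) ∈ P := by
        have h2 := hkey t
        have h3 := hkey t'
        have h4 : (φ t : M) = (φ t' : M) := by rw [htt]
        have := sub_mem h3 h2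
        rw [h4] at this
        simpa using this
      have h2 : ((t : M) - (t' : M)) ∈ T i := sub_mem t.2 t'.2
      have : (t : M) - (t' : M) = 0 := by
        have := hbot ▸ Submodule.mem_inf.mpr ⟨h2, h1⟩
        simpa using this
      exact Subtype.ext (sub_eq_zero.mp this)
    -- the range of φ in M
    set K' : Submodule R M := LinearMap.range (T'.subtype ∘ₗ φ) with hK'
    have hK'le : K' ≤ T' := by
      rintro y ⟨t, rfl⟩
      exact (φ t).2
    have hclosed' : ∀ x ∈ T', (∃ J : Ideal R, IsGVIdeal R J ∧ ∀ j ∈ J, j • x ∈ K') →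
        x ∈ K' := by
      intro x hxT' ⟨J, hJ, hx⟩
      have hch : ∀ j : J, ∃ u : T i, ((φ u : M)) = (j : R) • x := by
        intro j
        obtain ⟨u, hu⟩ := hx (j : R) j.2
        exact ⟨u, hu⟩
      choose t ht using hch
      have htadd : ∀ j j' : J, t (j + j') = t j + t j' := by
        intro j j'
        apply hφinj
        apply Subtype.ext
        show ((φ (t (j + j')) : M)) = ((φ (t j + t j') : M))
        rw [map_add]
        show _ = ((φ (t j) : M)) + ((φ (t j') : M))
        rw [ht, ht, ht, Submodule.coe_add, add_smul]
      have htsmul : ∀ (r : R) (j : J), t (r • j) = r • t j := by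
        intro r j
        apply hφinj
        apply Subtype.ext
        show ((φ (t (r • j)) : M)) = ((φ (r • t j) : M))
        rw [map_smul]
        show _ = r • ((φ (t j) : M))
        rw [ht, ht, Submodule.coe_smul, smul_smul, smul_eq_mul]
      let f : J →ₗ[R] M :=
        { toFun := fun j => (t j : M)
          map_add' := fun j j' => by simp only [htadd, Submodule.coe_add]
          map_smul' := fun r j => by simp only [htsmul, Submodule.coe_smul, RingHom.id_apply] }
      obtain ⟨a, haT, ha⟩ := WH.exists_smul_eq hM (hsimple i).1 hJ f (fun j => (t j).2)
      refine ⟨⟨a, haT⟩, ?_⟩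
      show ((φ ⟨a, haT⟩ : M)) = x
      refine WH.smul_cancel hM hJ (fun j hj => ?_)
      have h1 : j • (⟨a, haT⟩ : T i) = t ⟨j, hj⟩ := by
        apply Subtype.ext
        show j • a = ((t ⟨j, hj⟩ : M))
        exact ha ⟨j, hj⟩
      calc j • ((φ ⟨a, haT⟩ : M)) = ((φ (j • ⟨a, haT⟩) : M)) := by rw [map_smul]; rfl
      _ = ((φ (t ⟨j, hj⟩) : M)) := by rw [h1]
      _ = j • x := ht ⟨j, hj⟩
    rcases hT'.2.2 K' hK'le hclosed' with h | h
    · -- K' = ⊥ contradicts T i ≠ ⊥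
      exfalso
      obtain ⟨u, huT, hu0⟩ := (Submodule.ne_bot_iff (T i)).mp (hsimple i).2.1
      have h1 : ((φ ⟨u, huT⟩ : M)) ∈ K' := ⟨⟨u, huT⟩, rfl⟩
      rw [h] at h1
      have h2 : (φ ⟨u, huT⟩ : M) = 0 := by simpa using h1
      have h3 : φ ⟨u, huT⟩ = 0 := Subtype.ext h2
      have h4 : (⟨u, huT⟩ : T i) = 0 := hφinj (by rw [h3, map_zero])
      exact hu0 (by simpa using congrArg Subtype.val h4)
    · -- K' = T' : φ is surjective
      have hφsurj : Function.Surjective φ := by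
        intro y
        have : (y : M) ∈ K' := by rw [h]; exact y.2
        obtain ⟨u, hu⟩ := this
        exact ⟨u, Subtype.ext hu⟩
      exact ⟨i, ⟨(LinearEquiv.ofBijective φ ⟨hφinj, hφsurj⟩).symm⟩⟩
end

section
/- Let R be a commutative ring and let E be a GV-torsion-free injective R-module (i.e., a w-injective w-module). For each ideal A of R set A* = {q ∈ E : Aq = 0} and A** = {r ∈ R : rA* = 0}. Then the following are equivalent: (1) E is w-faithfully injective, i.e., Hom_R(B, E) ≠ 0 for every nonzero GV-torsion-free R-module B; (2) I = I** for every proper w-ideal I of R; (3) m = m** for every m ∈ w-Max(R). -/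
universe u v

section Aux

variable {R : Type u} [CommRing R]

/-- The annihilator of an element of a GV-torsion-free module is a w-ideal. -/
lemma isWIdeal_ker_toSpanSingleton {B : Type v} [AddCommGroup B] [Module R B]
    (htf : IsGVTorsionFree R B) (b : B) :
    IsWIdeal R (LinearMap.ker (LinearMap.toSpanSingleton R B b)) := by
  intro x hx
  obtain ⟨J, hJ, h⟩ := hx
  have htors : IsGVTorsionElem R (x • b) := by
    refine ⟨J, hJ, fun j hj => ?_⟩
    have := h j hj
    simp only [LinearMap.mem_ker, LinearMap.toSpanSingleton_apply] at this
    rw [smul_smul]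
    exact this
  have : x • b = 0 := htf _ htors
  simpa [LinearMap.mem_ker, LinearMap.toSpanSingleton_apply] using this

/-- The quotient by a w-ideal is GV-torsion-free. -/
lemma isGVTorsionFree_quotient {I : Ideal R} (hI : IsWIdeal R I) :
    IsGVTorsionFree R (R ⧸ I) := by
  intro x hx
  obtain ⟨y, rfl⟩ := Submodule.mkQ_surjective I x
  obtain ⟨J, hJ, h⟩ := hx
  rw [Submodule.mkQ_apply, Submodule.Quotient.mk_eq_zero]
  refine hI y ⟨J, hJ, fun j hj => ?_⟩
  have := h j hj
  rw [← map_smul, Submodule.mkQ_apply, Submodule.Quotient.mk_eq_zero] at this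
  simpa [smul_eq_mul] using this

/-- Extension lemma: if `E` is injective, `b : B`, `q : E` and every annihilator of `b`
annihilates `q`, then there is `f : B →ₗ[R] E` with `f b = q`. -/
lemma exists_linearMap_apply_eq {B : Type u} [AddCommGroup B] [Module R B]
    {E : Type u} [AddCommGroup E] [Module R E] (hinj : Module.Injective R E)
    (b : B) (q : E) (h : ∀ x : R, x • b = 0 → x • q = 0) :
    ∃ f : B →ₗ[R] E, f b = q := by
  set K := LinearMap.ker (LinearMap.toSpanSingleton R B b) with hK
  have hKle : K ≤ LinearMap.ker (LinearMap.toSpanSingleton R E q) := by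
    intro x hx
    simp only [hK, LinearMap.mem_ker, LinearMap.toSpanSingleton_apply] at hx ⊢
    exact h x hx
  have hφ : Function.Injective ⇑(K.liftQ (LinearMap.toSpanSingleton R B b) le_rfl) := by
    rw [← LinearMap.ker_eq_bot]
    exact Submodule.ker_liftQ_eq_bot _ _ _ le_rfl
  obtain ⟨f, hf⟩ := hinj.out (K.liftQ (LinearMap.toSpanSingleton R B b) le_rfl) hφ
    (K.liftQ (LinearMap.toSpanSingleton R E q) hKle)
  refine ⟨f, ?_⟩
  have := hf (Submodule.Quotient.mk 1)
  rw [Submodule.liftQ_apply, Submodule.liftQ_apply, LinearMap.toSpanSingleton_apply,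
    LinearMap.toSpanSingleton_apply, one_smul, one_smul] at this
  exact this

/-- Every proper w-ideal is contained in a maximal w-ideal. -/
lemma exists_isMaxWIdeal_ge (K : Ideal R) (hw : IsWIdeal R K) (hK : K ≠ ⊤) :
    ∃ m : Ideal R, IsMaxWIdeal R m ∧ K ≤ m := by
  have hzorn : ∀ c ⊆ {I : Ideal R | IsWIdeal R I ∧ I ≠ ⊤}, IsChain (· ≤ ·) c →
      ∀ y ∈ c, ∃ ub ∈ {I : Ideal R | IsWIdeal R I ∧ I ≠ ⊤}, ∀ z ∈ c, z ≤ ub := by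
    intro c hc hchain y hy
    have hcne : c.Nonempty := ⟨y, hy⟩
    have hdir := hchain.directedOn
    refine ⟨sSup c, ⟨?_, ?_⟩, fun z hz => le_sSup hz⟩
    · -- sSup of a chain of w-ideals is a w-ideal
      intro x hx
      obtain ⟨J, hJ, h⟩ := hx
      set N : Ideal R := Submodule.map (LinearMap.mulRight R x) J with hN
      have hNfg : N.FG := Submodule.FG.map _ hJ.1
      have hNle : N ≤ sSup c := by
        rintro _ ⟨j, hj, rfl⟩
        simpa [LinearMap.mulRight_apply] using h j hj
      have hcomp := (Submodule.fg_iff_compact N).1 hNfg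
      obtain ⟨I0, hI0c, hNI0⟩ :=
        (CompleteLattice.isCompactElement_iff_le_of_directed_sSup_le (Ideal R) N).1 hcomp
          c hcne hdir hNle
      have hxI0 : x ∈ I0 := by
        refine (hc hI0c).1 x ⟨J, hJ, fun j hj => ?_⟩
        have : (LinearMap.mulRight R x) j ∈ N := Submodule.mem_map_of_mem hj
        simpa [LinearMap.mulRight_apply] using hNI0 this
      exact le_sSup hI0c hxI0
    · -- sSup of a chain of proper ideals is proper
      intro htop
      have h1 : (1 : R) ∈ sSup c := htop ▸ Submodule.mem_top
      obtain ⟨I0, hI0, hI01⟩ :=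
        (Submodule.mem_sSup_of_directed hcne hdir).1 h1
      exact (hc hI0).2 (Ideal.eq_top_iff_one I0 |>.2 hI01)
  obtain ⟨m, hKm, hm⟩ := zorn_le_nonempty₀ {I : Ideal R | IsWIdeal R I ∧ I ≠ ⊤} hzorn K ⟨hw, hK⟩
  exact ⟨m, ⟨hm.1.1, hm.1.2,
    fun I hI hIt hmI => le_antisymm (hm.2 ⟨hI, hIt⟩ hmI) hmI⟩, hKm⟩

end Aux

/-- w-analogue of Ishikawa's Theorem 4.1: for a GV-torsion-free
injective `R`-module `E`, writing `A* = {q ∈ E : Aq = 0}` and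
`A** = {r ∈ R : r A* = 0}`, TFAE:
(1) `E` is w-faithfully injective;
(2) `I = I**` for every proper w-ideal `I`;
(3) `m = m**` for every maximal w-ideal `m`. -/
theorem wFaithfullyInjective_tfae_bidual (R : Type u) [CommRing R] (E : Type u)
    [AddCommGroup E] [Module R E] (htf : IsGVTorsionFree R E)
    (hinj : Module.Injective R E) :
    List.TFAE [
      ∀ (B : Type u) [AddCommGroup B] [Module R B], IsGVTorsionFree R B → Nontrivial B →
        ∃ f : B →ₗ[R] E, f ≠ 0,
      ∀ I : Ideal R, IsWIdeal R I → I ≠ ⊤ →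
        ∀ r : R, r ∈ I ↔ ∀ q : E, (∀ a ∈ I, a • q = 0) → r • q = 0,
      ∀ m : Ideal R, IsMaxWIdeal R m →
        ∀ r : R, r ∈ m ↔ ∀ q : E, (∀ a ∈ m, a • q = 0) → r • q = 0 ] := by
  tfae_have 1 → 2 := by
    intro h1 I hIw hIt r
    constructor
    · intro hr q hq
      exact hq r hr
    · intro hq
      by_contra hrI
      -- the annihilator of `mkQ r` in `R ⧸ I`
      set K := LinearMap.ker (LinearMap.toSpanSingleton R (R ⧸ I) (I.mkQ r)) with hKdef
      have hKmem : ∀ x : R, x ∈ K ↔ x * r ∈ I := by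
        intro x
        rw [hKdef, LinearMap.mem_ker, LinearMap.toSpanSingleton_apply, ← map_smul,
          Submodule.mkQ_apply, Submodule.Quotient.mk_eq_zero, smul_eq_mul]
      have hKw : IsWIdeal R K :=
        isWIdeal_ker_toSpanSingleton (isGVTorsionFree_quotient hIw) _
      have hKt : K ≠ ⊤ := by
        intro htop
        have : (1 : R) ∈ K := htop ▸ Submodule.mem_top
        rw [hKmem, one_mul] at this
        exact hrI this
      haveI : Nontrivial (R ⧸ K) :=
        Submodule.Quotient.nontrivial_iff.2 (lt_top_iff_ne_top.2 hKt).ne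
      obtain ⟨g, hg⟩ := h1 (R ⧸ K) (isGVTorsionFree_quotient hKw) inferInstance
      set q0 := g (K.mkQ 1) with hq0def
      have hq0 : q0 ≠ 0 := by
        intro h0
        apply hg
        refine LinearMap.ext fun x => ?_
        obtain ⟨y, rfl⟩ := Submodule.mkQ_surjective K x
        have : K.mkQ y = y • K.mkQ 1 := by
          rw [← map_smul, smul_eq_mul, mul_one]
        rw [this, map_smul, ← hq0def, h0, smul_zero, LinearMap.zero_apply]
      have hann : ∀ x : R, x • (I.mkQ r) = 0 → x • q0 = 0 := by
        intro x hx
        have hxK : x ∈ K := by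
          rw [hKdef, LinearMap.mem_ker, LinearMap.toSpanSingleton_apply]
          exact hx
        have hmk : K.mkQ x = 0 := by
          rw [Submodule.mkQ_apply, Submodule.Quotient.mk_eq_zero]
          exact hxK
        calc x • q0 = g (x • K.mkQ 1) := (map_smul g x _).symm
          _ = g (K.mkQ x) := by rw [← map_smul, smul_eq_mul, mul_one]
          _ = 0 := by rw [hmk, map_zero]
      obtain ⟨f, hf⟩ := exists_linearMap_apply_eq hinj (I.mkQ r) q0 hann
      set q := f (I.mkQ 1) with hqdef
      have hIq : ∀ a ∈ I, a • q = 0 := by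
        intro a ha
        rw [hqdef, ← map_smul, ← map_smul, smul_eq_mul, mul_one,
          Submodule.mkQ_apply, (Submodule.Quotient.mk_eq_zero I).2 ha, map_zero]
      have hrq : r • q = q0 := by
        rw [hqdef, ← map_smul, ← map_smul, smul_eq_mul, mul_one, hf]
      exact hq0 (hrq ▸ hq q hIq)
  tfae_have 2 → 3 := by
    intro h2 m hm
    exact h2 m hm.1 hm.2.1
  tfae_have 3 → 1 := by
    intro h3 B _ _ hBtf hBnt
    obtain ⟨b, hb⟩ := exists_ne (0 : B)
    set K := LinearMap.ker (LinearMap.toSpanSingleton R B b) with hKdef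
    have hKw : IsWIdeal R K := isWIdeal_ker_toSpanSingleton hBtf b
    have hKt : K ≠ ⊤ := by
      intro htop
      have : (1 : R) ∈ K := htop ▸ Submodule.mem_top
      rw [hKdef, LinearMap.mem_ker, LinearMap.toSpanSingleton_apply, one_smul] at this
      exact hb this
    obtain ⟨m, hmmax, hKm⟩ := exists_isMaxWIdeal_ge K hKw hKt
    have h1m : (1 : R) ∉ m := fun h => hmmax.2.1 ((Ideal.eq_top_iff_one m).2 h)
    have hex : ∃ q : E, (∀ a ∈ m, a • q = 0) ∧ q ≠ 0 := by
      by_contra hno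
      push_neg at hno
      apply h1m
      rw [h3 m hmmax 1]
      intro q hq
      rw [one_smul]
      exact hno q hq
    obtain ⟨q, hqm, hq0⟩ := hex
    have hann : ∀ x : R, x • b = 0 → x • q = 0 := by
      intro x hx
      refine hqm x (hKm ?_)
      rw [hKdef, LinearMap.mem_ker, LinearMap.toSpanSingleton_apply]
      exact hx
    obtain ⟨f, hf⟩ := exists_linearMap_apply_eq hinj b q hann
    refine ⟨f, fun h0 => hq0 ?_⟩
    rw [← hf, h0, LinearMap.zero_apply]
  tfae_finish
end
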